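/- arXiv:1306.0265 — 3 statements merged into one kernel-verified Lean document; each statement's English description precedes it below -/
import Mathlib

section
/- The Jacobi–Anger expansion holds: for all real z and φ, exp(i z cos φ) = J₀(z) + 2 Σ_{n=1}^{∞} iⁿ Jₙ(z) cos(nφ), where the series converges. -/
open Real MeasureTheory

/-- Bessel function of the first kind of integer order `n`. -/
noncomputable def besselJ (n : ℕ) (x : ℝ) : ℝ :=
  ∑' m : ℕ, (-1 : ℝ)^m / (m.factorial * (m+n).factorial) * (x/2)^(2*m+n)

lemma besselJ_summable (n : ℕ) (x : ℝ) :
    Summable (fun m : ℕ => (-1 : ℝ)^m / (m.factorial * (m+n).factorial) * (x/2)^(2*m+n)) := by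
  refine Summable.of_norm (Summable.of_nonneg_of_le (fun m => norm_nonneg _) (fun m => ?_)
    (((Real.summable_pow_div_factorial (|x/2|^2)).mul_left (|x/2|^n))))
  have h1 : ‖(-1 : ℝ)^m / ((m.factorial : ℝ) * ((m+n).factorial : ℝ)) * (x/2)^(2*m+n)‖
      = |x/2|^(2*m+n) / ((m.factorial : ℝ) * ((m+n).factorial : ℝ)) := by
    rw [norm_mul, norm_div, norm_pow, norm_neg, norm_one, one_pow, Real.norm_eq_abs,
      Real.norm_eq_abs, abs_pow, abs_mul, Nat.abs_cast, Nat.abs_cast, div_mul_eq_mul_div, one_mul]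
  rw [h1]
  have h2 : |x/2|^(2*m+n) = (|x/2|^2)^m * |x/2|^n := by
    rw [pow_add, pow_mul]
  rw [h2]
  have hm : (1 : ℝ) ≤ (m.factorial : ℝ) := by exact_mod_cast m.factorial_pos
  have hmn : (1 : ℝ) ≤ ((m+n).factorial : ℝ) := by exact_mod_cast (m+n).factorial_pos
  calc (|x/2|^2)^m * |x/2|^n / ((m.factorial : ℝ) * ((m+n).factorial : ℝ))
      ≤ (|x/2|^2)^m * |x/2|^n / ((m.factorial : ℝ) * 1) := by
        gcongr
    _ = |x/2|^n * ((|x/2|^2)^m / (m.factorial : ℝ)) := by ring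

lemma besselJ_hasSum (n : ℕ) (x : ℝ) :
    HasSum (fun m : ℕ => (-1 : ℝ)^m / (m.factorial * (m+n).factorial) * (x/2)^(2*m+n))
      (besselJ n x) := (besselJ_summable n x).hasSum

lemma hasSum_complex (n : ℕ) (z : ℝ) :
    HasSum (fun k : ℕ => (Complex.I * z / 2)^(2*k+n) / ((k.factorial : ℂ) * ((k+n).factorial : ℂ)))
      (Complex.I^n * (besselJ n z : ℂ)) := by
  have h := (Complex.hasSum_ofReal.mpr (besselJ_hasSum n z)).mul_left (Complex.I^n)
  refine h.congr_fun fun k => ?_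
  have hpow : (Complex.I * z / 2)^(2*k+n) = (-1:ℂ)^k * Complex.I^n * ((z:ℂ)/2)^(2*k+n) := by
    rw [show Complex.I * (z:ℂ) / 2 = Complex.I * ((z:ℂ)/2) by ring, mul_pow, pow_add, pow_mul,
      Complex.I_sq]
  rw [hpow]
  push_cast
  ring

def jaEquiv : ℤ × ℕ ≃ ℕ × ℕ where
  toFun p := (p.2 + p.1.toNat, p.2 + (-p.1).toNat)
  invFun q := ((q.1 : ℤ) - (q.2 : ℤ), min q.1 q.2)
  left_inv p := by
    obtain ⟨n, k⟩ := p
    simp only [Prod.mk.injEq]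
    constructor <;> [skip; skip] <;> omega
  right_inv q := by
    obtain ⟨j, k⟩ := q
    simp only [Prod.mk.injEq]
    constructor <;> omega

lemma exp_add_exp_neg (x : ℝ) :
    Complex.exp (Complex.I * x) + Complex.exp (-(Complex.I * x)) = 2 * (Real.cos x : ℂ) := by
  rw [mul_comm Complex.I (x:ℂ), ← neg_mul, Complex.exp_mul_I, Complex.exp_mul_I,
    Complex.cos_neg, Complex.sin_neg, Complex.ofReal_cos]
  ring

set_option maxHeartbeats 1000000 in
/-- Jacobi–Anger expansion. -/
theorem stmt2 (z φ : ℝ) :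
    HasSum (fun n : ℕ => Complex.I^(n+1) * (besselJ (n+1) z : ℂ) * ((Real.cos ((n+1) * φ) : ℝ) : ℂ))
      ((Complex.exp (Complex.I * z * Real.cos φ) - (besselJ 0 z : ℂ)) / 2) := by
  set u := Complex.exp (Complex.I * φ) with hu
  set v := Complex.exp (-(Complex.I * φ)) with hv
  set c := Complex.I * z / 2 with hc
  have huv : u * v = 1 := by rw [hu, hv, ← Complex.exp_add]; simp
  set F : ℕ → ℂ := fun j => (c*u)^j / (j.factorial : ℂ) with hFdef
  set G : ℕ → ℂ := fun j => (c*v)^j / (j.factorial : ℂ) with hGdef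
  have ha : HasSum F (Complex.exp (c*u)) := by
    rw [Complex.exp_eq_exp_ℂ]; exact NormedSpace.expSeries_div_hasSum_exp (c*u)
  have hb : HasSum G (Complex.exp (c*v)) := by
    rw [Complex.exp_eq_exp_ℂ]; exact NormedSpace.expSeries_div_hasSum_exp (c*v)
  have hnorm : ∀ w : ℂ, Summable (fun j : ℕ => ‖w^j / (j.factorial : ℂ)‖) := by
    intro w
    refine (Real.summable_pow_div_factorial ‖w‖).congr fun j => ?_
    rw [norm_div, norm_pow]
    simp
  have hs : Summable (fun jk : ℕ × ℕ => F jk.1 * G jk.2) :=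
    Summable.of_norm ((hnorm (c*u)).mul_norm (hnorm (c*v)))
  have hf : HasSum (fun jk : ℕ × ℕ => F jk.1 * G jk.2)
      (Complex.exp (c*u) * Complex.exp (c*v)) := ha.mul hb hs
  have hE : Complex.exp (c*u) * Complex.exp (c*v) = Complex.exp (Complex.I * z * Real.cos φ) := by
    rw [← Complex.exp_add]
    congr 1
    have h2 : u + v = 2 * (Real.cos φ : ℂ) := exp_add_exp_neg φ
    have h3 : c*u + c*v = c * (u + v) := by ring
    rw [h3, h2, hc]
    ring
  rw [hE] at hf
  set g : ℤ → ℂ := fun n =>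
    u ^ n.toNat * v ^ (-n).toNat * (Complex.I ^ n.natAbs * (besselJ n.natAbs z : ℂ)) with hgdef
  have hfib : ∀ n : ℤ, HasSum (fun k : ℕ =>
      F (k + n.toNat) * G (k + (-n).toNat)) (g n) := by
    intro n
    obtain ⟨m, rfl | rfl⟩ := Int.eq_nat_or_neg n
    · have e1 : ((m:ℤ)).toNat = m := by omega
      have e2 : (-(m:ℤ)).toNat = 0 := by omega
      have e3 : ((m:ℤ)).natAbs = m := by omega
      rw [hgdef]
      simp only [e1, e2, e3, pow_zero, mul_one]
      have h4 := (hasSum_complex m z).mul_left (u^m)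
      refine h4.congr_fun fun k => ?_
      simp only [e1, e2, add_zero, hFdef, hGdef]
      rw [div_mul_div_comm]
      have hnum : (c*u)^(k+m) * (c*v)^k = u^m * c^(2*k+m) * (u*v)^k := by ring
      rw [hnum, huv, one_pow, mul_one, mul_comm ((k+m).factorial : ℂ) ((k).factorial : ℂ),
        mul_div_assoc]
    · have e1 : (-(m:ℤ)).toNat = 0 := by omega
      have e2 : (-(-(m:ℤ))).toNat = m := by omega
      have e3 : (-(m:ℤ)).natAbs = m := by omega
      rw [hgdef]
      simp only [e1, e2, e3, pow_zero, one_mul]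
      have h4 := (hasSum_complex m z).mul_left (v^m)
      refine h4.congr_fun fun k => ?_
      simp only [e1, e2, add_zero, hFdef, hGdef]
      rw [div_mul_div_comm]
      have hnum : (c*u)^k * (c*v)^(k+m) = v^m * c^(2*k+m) * (u*v)^k := by ring
      rw [hnum, huv, one_pow, mul_one, mul_div_assoc]
  have hF2 : HasSum ((fun jk : ℕ × ℕ => F jk.1 * G jk.2) ∘ jaEquiv)
      (Complex.exp (Complex.I * z * Real.cos φ)) := jaEquiv.hasSum_iff.mpr hf
  have hg : HasSum g (Complex.exp (Complex.I * z * Real.cos φ)) :=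
    hF2.prod_fiberwise hfib
  have hN : HasSum (fun n : ℕ => g n + g (-(n:ℤ)))
      (Complex.exp (Complex.I * z * Real.cos φ) + g 0) := hg.nat_add_neg
  have hg0 : g 0 = (besselJ 0 z : ℂ) := by
    rw [hgdef]
    simp
  have hsh := (hasSum_nat_add_iff' (f := fun n : ℕ => g n + g (-(n:ℤ))) 1).mpr hN
  simp only [Finset.sum_range_one, Nat.cast_zero, neg_zero, hg0] at hsh
  have hsh2 := hsh.div_const 2
  have hval : (Complex.exp (Complex.I * z * Real.cos φ) + (besselJ 0 z : ℂ)
      - ((besselJ 0 z : ℂ) + (besselJ 0 z : ℂ))) / 2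
      = (Complex.exp (Complex.I * z * Real.cos φ) - (besselJ 0 z : ℂ)) / 2 := by ring
  rw [hval] at hsh2
  refine hsh2.congr_fun fun n => ?_
  have e1 : ((n:ℤ)+1).toNat = n + 1 := by omega
  have e2 : (-((n:ℤ)+1)).toNat = 0 := by omega
  have e3 : ((n:ℤ)+1).natAbs = n + 1 := by omega
  have e4 : (-((n:ℤ)+1)).natAbs = n + 1 := by omega
  have e5 : (-(-((n:ℤ)+1))).toNat = n + 1 := by omega
  have hcast : ((n:ℤ) : ℤ) + 1 = (((n+1 : ℕ) : ℤ)) := by push_cast; ring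
  rw [hgdef]
  simp only [Nat.cast_add, Nat.cast_one, e1, e2, e3, e4, e5, pow_zero, mul_one, one_mul]
  have hun : u^(n+1) + v^(n+1) = 2 * ((Real.cos (((n:ℝ)+1) * φ) : ℝ) : ℂ) := by
    have hu1 : u^(n+1) = Complex.exp (Complex.I * ((((n:ℝ)+1)) * φ : ℝ)) := by
      rw [hu, ← Complex.exp_nat_mul]
      congr 1
      push_cast
      ring
    have hv1 : v^(n+1) = Complex.exp (-(Complex.I * ((((n:ℝ)+1)) * φ : ℝ))) := by
      rw [hv, ← Complex.exp_nat_mul]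
      congr 1
      push_cast
      ring
    rw [hu1, hv1, exp_add_exp_neg]
  calc (Complex.I^(n+1) * (besselJ (n+1) z : ℂ)) * ((Real.cos (((n:ℝ)+1) * φ) : ℝ) : ℂ)
      = (Complex.I^(n+1) * (besselJ (n+1) z : ℂ)) * ((u^(n+1) + v^(n+1)) / 2) := by
        rw [hun]; ring
    _ = (u^(n+1) * (Complex.I^(n+1) * (besselJ (n+1) z : ℂ))
        + v^(n+1) * (Complex.I^(n+1) * (besselJ (n+1) z : ℂ))) / 2 := by ring
end

section
/- For real a > 0 and b > 0, the integral ∫₀^∞ x e^{−ax} J₀(bx) dx equals a/(a² + b²)^{3/2}. -/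
open Real MeasureTheory

lemma prod_odd_even (m : ℕ) :
    ∏ i ∈ Finset.range m, ((2*(i:ℝ)+1)/(2*i+2)) = (2*m).factorial / (4^m * (m.factorial)^2) := by
  induction m with
  | zero => simp
  | succ k ih =>
    rw [Finset.prod_range_succ, ih]
    have h1 : (2*(k+1)) = (2*k+1)+1 := by ring
    rw [h1]
    simp [Nat.factorial_succ]
    have hk : ((2*k).factorial : ℝ) ≠ 0 := Nat.cast_ne_zero.mpr (Nat.factorial_ne_zero _)
    have hk2 : ((k).factorial : ℝ) ≠ 0 := Nat.cast_ne_zero.mpr (Nat.factorial_ne_zero _)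
    field_simp
    ring

lemma besselJ0_repr (y : ℝ) :
    π * besselJ 0 y = ∫ θ in Set.Ioc (0:ℝ) π, Real.cos (y * Real.sin θ) := by
  have hptwise : ∀ θ : ℝ, Real.cos (y * Real.sin θ)
      = ∑' m : ℕ, (-1:ℝ)^m * (y * Real.sin θ)^(2*m) / (2*m).factorial := fun θ =>
    Real.cos_eq_tsum (y * Real.sin θ)
  have hcont : ∀ m : ℕ, Continuous (fun θ : ℝ => (-1:ℝ)^m * (y * Real.sin θ)^(2*m) / (2*m).factorial) := by
    intro m; fun_prop
  have hint : ∀ m : ℕ, Integrable (fun θ : ℝ => (-1:ℝ)^m * (y * Real.sin θ)^(2*m) / (2*m).factorial)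
      (volume.restrict (Set.Ioc (0:ℝ) π)) := fun m =>
    (hcont m).integrableOn_Ioc
  have hsum : Summable (fun m : ℕ => ∫ θ in Set.Ioc (0:ℝ) π,
      ‖(-1:ℝ)^m * (y * Real.sin θ)^(2*m) / (2*m).factorial‖) := by
    have hg : Summable (fun m : ℕ => π * (|y| ^ (2*m) / ((2*m).factorial : ℝ))) := by
      apply Summable.mul_left
      have h := Real.summable_pow_div_factorial |y|
      exact h.comp_injective (fun a b hab => by dsimp only at hab; omega : Function.Injective (fun m : ℕ => 2*m))
    refine Summable.of_nonneg_of_le (fun m => integral_nonneg fun θ => norm_nonneg _)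
      (fun m => ?_) hg
    have hb : ∀ θ ∈ Set.Ioc (0:ℝ) π, ‖(-1:ℝ)^m * (y * Real.sin θ)^(2*m) / (2*m).factorial‖
        ≤ |y| ^ (2*m) / ((2*m).factorial : ℝ) := by
      intro θ _
      have h1 : |y * Real.sin θ| ≤ |y| := by
        rw [abs_mul]
        calc |y| * |Real.sin θ| ≤ |y| * 1 := by gcongr; exact abs_sin_le_one θ
          _ = |y| := mul_one _
      simp only [norm_div, norm_mul, norm_pow, norm_neg, norm_one, one_pow, one_mul,
        Real.norm_eq_abs, Nat.abs_cast]
      gcongr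
      rw [← abs_mul]
      exact h1
    calc ∫ θ in Set.Ioc (0:ℝ) π, ‖(-1:ℝ)^m * (y * Real.sin θ)^(2*m) / (2*m).factorial‖
        ≤ ∫ θ in Set.Ioc (0:ℝ) π, (|y| ^ (2*m) / ((2*m).factorial : ℝ)) := by
          apply setIntegral_mono_on (hint m).norm (integrableOn_const (by simp [Real.pi_pos]))
            measurableSet_Ioc hb
      _ = π * (|y| ^ (2*m) / ((2*m).factorial : ℝ)) := by
          rw [setIntegral_const]
          simp [Real.volume_Ioc, Real.pi_pos.le, ENNReal.toReal_ofReal, smul_eq_mul]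
  have hswap := MeasureTheory.integral_tsum_of_summable_integral_norm hint hsum
  have : (∫ θ in Set.Ioc (0:ℝ) π, Real.cos (y * Real.sin θ))
      = ∑' m : ℕ, ∫ θ in Set.Ioc (0:ℝ) π, (-1:ℝ)^m * (y * Real.sin θ)^(2*m) / (2*m).factorial := by
    rw [hswap]
    exact setIntegral_congr_fun measurableSet_Ioc (fun θ _ => hptwise θ)
  rw [this]
  have hterm : ∀ m : ℕ, (∫ θ in Set.Ioc (0:ℝ) π, (-1:ℝ)^m * (y * Real.sin θ)^(2*m) / (2*m).factorial)
      = π * ((-1:ℝ)^m / (m.factorial * m.factorial) * (y/2)^(2*m)) := by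
    intro m
    have : (∫ θ in Set.Ioc (0:ℝ) π, (-1:ℝ)^m * (y * Real.sin θ)^(2*m) / (2*m).factorial)
        = ((-1:ℝ)^m * y^(2*m) / (2*m).factorial) * ∫ θ in (0:ℝ)..π, Real.sin θ ^ (2*m) := by
      rw [intervalIntegral.integral_of_le Real.pi_pos.le, ← integral_const_mul]
      apply setIntegral_congr_fun measurableSet_Ioc
      intro θ _
      dsimp only
      rw [mul_pow]
      ring
    rw [this, integral_sin_pow_even, prod_odd_even]
    have h1 : ((2*m).factorial : ℝ) ≠ 0 := Nat.cast_ne_zero.mpr (Nat.factorial_ne_zero _)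
    have h2 : ((m).factorial : ℝ) ≠ 0 := Nat.cast_ne_zero.mpr (Nat.factorial_ne_zero _)
    have h3 : (y/2)^(2*m) = y^(2*m) / 4^m := by
      rw [div_pow, pow_mul, pow_mul]; norm_num
    rw [h3]
    field_simp
  rw [tsum_congr hterm, tsum_mul_left]
  unfold besselJ
  congr 1



lemma integrable_x_exp {r : ℝ} (hr : 0 < r) :
    IntegrableOn (fun x : ℝ => x * Real.exp (-r * x)) (Set.Ioi 0) := by
  have h := integrableOn_rpow_mul_exp_neg_mul_rpow (by norm_num : (-1:ℝ) < 1) zero_lt_one hr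
  apply h.congr_fun ?_ measurableSet_Ioi
  intro x hx
  simp [Real.rpow_one]

lemma complex_laplace_x (w : ℂ) (hw : 0 < w.re) :
    IntegrableOn (fun x : ℝ => (x:ℂ) * Complex.exp (-(w*x))) (Set.Ioi 0) ∧
    (∫ x : ℝ in Set.Ioi 0, (x:ℂ) * Complex.exp (-(w*x))) = 1/w^2 := by
  have hw0 : w ≠ 0 := fun h => by simp [h] at hw
  have hnorm : ∀ x : ℝ, ‖(x:ℂ) * Complex.exp (-(w*x))‖ = |x| * Real.exp (-w.re * x) := by
    intro x
    rw [norm_mul, Complex.norm_real, Real.norm_eq_abs, Complex.norm_exp]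
    have h1 : (-(w * (x:ℂ))).re = -w.re * x := by simp
    rw [h1]
  have hInt : IntegrableOn (fun x : ℝ => (x:ℂ) * Complex.exp (-(w*x))) (Set.Ioi 0) := by
    refine Integrable.mono' (integrable_x_exp hw) ?_ ?_
    · apply Continuous.aestronglyMeasurable
      continuity
    · filter_upwards [ae_restrict_mem measurableSet_Ioi] with x hx
      rw [hnorm x, abs_of_pos hx]
  refine ⟨hInt, ?_⟩
  set G : ℝ → ℂ := fun x => -Complex.exp (-(w*x)) * (x/w + 1/w^2) with hG
  have hderiv : ∀ x : ℝ, HasDerivAt G ((x:ℂ) * Complex.exp (-(w*x))) x := by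
    intro x
    have hc : ∀ z : ℂ, HasDerivAt (fun z : ℂ => -Complex.exp (-(w*z)) * (z/w + 1/w^2))
        (z * Complex.exp (-(w*z))) z := by
      intro z
      have h1 : HasDerivAt (fun z : ℂ => -(w*z)) (-w) z := by
        simpa using ((hasDerivAt_id z).const_mul (-w))
      have h2 : HasDerivAt (fun z : ℂ => Complex.exp (-(w*z)))
          (Complex.exp (-(w*z)) * -w) z := (Complex.hasDerivAt_exp _).comp z h1
      have h3 : HasDerivAt (fun z : ℂ => z/w + 1/w^2) (1/w) z :=
        ((hasDerivAt_id z).div_const w).add_const _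
      have h4 := (h2.neg).mul h3
      refine h4.congr_deriv ?_
      symm
      simp only [Pi.neg_apply]
      field_simp
      ring
    have := (hc x).comp_ofReal
    simpa [hG] using this
  have htend : Filter.Tendsto G Filter.atTop (nhds 0) := by
    apply squeeze_zero_norm' (a := fun x : ℝ => (x * (1/‖w‖) + 1/‖w‖^2) * Real.exp (-w.re * x))
    · filter_upwards [Filter.eventually_ge_atTop (0:ℝ)] with x hx
      rw [hG]
      simp only [norm_mul, norm_neg, Complex.norm_exp]
      have h1 : (-(w*(x:ℂ))).re = -w.re * x := by simp
      rw [h1, mul_comm]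
      gcongr
      calc ‖(x:ℂ)/w + 1/w^2‖ ≤ ‖(x:ℂ)/w‖ + ‖(1:ℂ)/w^2‖ := norm_add_le _ _
        _ = x * (1/‖w‖) + 1/‖w‖^2 := by
            rw [norm_div, norm_div, norm_one, norm_pow, Complex.norm_real, Real.norm_eq_abs,
              abs_of_nonneg hx]
            ring
    · have hx1 : Filter.Tendsto (fun x : ℝ => x * Real.exp (-w.re * x)) Filter.atTop (nhds 0) := by
        have hcomp := (tendsto_pow_mul_exp_neg_atTop_nhds_zero 1).comp
          (Filter.tendsto_id.const_mul_atTop hw)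
        rw [Function.comp_def] at hcomp
        simp only [id_eq, pow_one] at hcomp
        have h2 := hcomp.const_mul (1/w.re)
        simp only [mul_zero, zero_mul] at h2
        apply h2.congr
        intro x
        rw [neg_mul]
        field_simp
      have hx0 : Filter.Tendsto (fun x : ℝ => Real.exp (-w.re * x)) Filter.atTop (nhds 0) := by
        have h5 := Real.tendsto_exp_neg_atTop_nhds_zero.comp
          (Filter.tendsto_id.const_mul_atTop hw)
        rw [Function.comp_def] at h5
        simp only [id_eq] at h5
        apply h5.congr
        intro x
        rw [neg_mul]
      have hsum := (hx1.const_mul (1/‖w‖)).add (hx0.const_mul (1/‖w‖^2))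
      simp only [mul_zero, add_zero] at hsum
      apply hsum.congr
      intro x
      ring
  have := MeasureTheory.integral_Ioi_of_hasDerivAt_of_tendsto
    (hderiv 0).continuousAt.continuousWithinAt (fun x _ => hderiv x) hInt htend
  rw [this, hG]
  simp

lemma laplace_x_cos (r c : ℝ) (hr : 0 < r) :
    IntegrableOn (fun x : ℝ => x * Real.exp (-r*x) * Real.cos (c*x)) (Set.Ioi 0) ∧
    ∫ x in Set.Ioi (0:ℝ), x * Real.exp (-r*x) * Real.cos (c*x) = (r^2-c^2)/(r^2+c^2)^2 := by
  set w : ℂ := r + c*Complex.I with hwdef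
  have hwre : w.re = r := by simp [hwdef]
  have hwim : w.im = c := by simp [hwdef]
  obtain ⟨hint, hval⟩ := complex_laplace_x w (by rw [hwre]; exact hr)
  have hre : ∀ x : ℝ, ((x:ℂ) * Complex.exp (-(w*(x:ℂ)))).re
      = x * Real.exp (-r*x) * Real.cos (c*x) := by
    intro x
    rw [Complex.mul_re]
    simp only [Complex.ofReal_re, Complex.ofReal_im, zero_mul, sub_zero, Complex.exp_re,
      Complex.neg_re, Complex.neg_im, Complex.mul_re, Complex.mul_im, hwre, hwim]
    rw [mul_assoc]
    norm_num [Real.cos_neg]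
  constructor
  · exact hint.re.congr (Filter.Eventually.of_forall fun x => hre x)
  · have h2 : (∫ x in Set.Ioi (0:ℝ), x * Real.exp (-r*x) * Real.cos (c*x)) = (1/w^2).re := by
      rw [← hval]
      rw [show ((∫ x in Set.Ioi (0:ℝ), (x:ℂ) * Complex.exp (-(w*(x:ℂ)))).re : ℝ)
        = RCLike.re (∫ x in Set.Ioi (0:ℝ), (x:ℂ) * Complex.exp (-(w*(x:ℂ)))) from rfl,
        ← integral_re hint]
      exact setIntegral_congr_fun measurableSet_Ioi (fun x _ => (hre x).symm)
    rw [h2]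
    have hre2 : (w^2).re = r^2 - c^2 := by
      rw [pow_two, Complex.mul_re, hwre, hwim]; ring
    have him2 : (w^2).im = 2*r*c := by
      rw [pow_two, Complex.mul_im, hwre, hwim]; ring
    rw [one_div, Complex.inv_re, Complex.normSq_apply, hre2, him2]
    congr 1
    ring


section D
variable {a b : ℝ}

lemma trig_integral (a b : ℝ) (ha : 0 < a) (hb : 0 < b) :
    ∫ θ in (0:ℝ)..π, (a^2 - b^2 * Real.sin θ^2)/(a^2 + b^2 * Real.sin θ^2)^2
      = π * a / Real.sqrt (a^2+b^2) ^ 3 := by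
  set c : ℝ := Real.sqrt (a^2+b^2) with hcdef
  have hc0 : 0 < c := Real.sqrt_pos.mpr (by positivity)
  have hc2 : c^2 = a^2 + b^2 := Real.sq_sqrt (by positivity)
  set f : ℝ → ℝ := fun θ => (a^2 - b^2 * Real.sin θ^2)/(a^2 + b^2 * Real.sin θ^2)^2 with hfdef
  have hu : ∀ θ : ℝ, 0 < a^2 + b^2 * Real.sin θ^2 := fun θ => by positivity
  have hfc : Continuous f := by
    apply Continuous.div (by fun_prop) (by fun_prop)
    intro θ; exact pow_ne_zero 2 (hu θ).ne'
  -- the common rational part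
  set A : ℝ → ℝ := fun θ => (b^2/c^2) * (Real.sin θ * Real.cos θ / (a^2 + b^2 * Real.sin θ^2))
    with hAdef
  have hA : ∀ θ : ℝ, HasDerivAt A
      ((b^2/c^2) * ((a^2 - (2*a^2+b^2) * Real.sin θ^2) / (a^2 + b^2 * Real.sin θ^2)^2)) θ := by
    intro θ
    have q1 : HasDerivAt (fun θ : ℝ => Real.sin θ * Real.cos θ)
        (Real.cos θ * Real.cos θ + Real.sin θ * (-Real.sin θ)) θ :=
      (Real.hasDerivAt_sin θ).mul (Real.hasDerivAt_cos θ)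
    have q2 : HasDerivAt (fun θ : ℝ => a^2 + b^2 * Real.sin θ^2)
        (b^2 * (2 * Real.sin θ ^ 1 * Real.cos θ)) θ := by
      have := ((Real.hasDerivAt_sin θ).pow 2).const_mul (b^2)
      simpa using this.const_add (a^2)
    have q3 := (q1.div q2 (hu θ).ne').const_mul (b^2/c^2)
    refine q3.congr_deriv ?_
    symm
    have hpy := Real.sin_sq_add_cos_sq θ
    field_simp
    linear_combination (b^2*Real.sin θ^2 - a^2) * hpy
  have harc1 : ∀ θ : ℝ, Real.cos θ ≠ 0 → HasDerivAt (fun θ => (a/c^3) * Real.arctan ((c/a) * Real.tan θ))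
      ((a/c^3) * (a*c / (a^2 + b^2 * Real.sin θ^2))) θ := by
    intro θ hcos
    have ht := Real.hasDerivAt_tan hcos
    have h1 := (Real.hasDerivAt_arctan ((c/a) * Real.tan θ)).comp θ (ht.const_mul (c/a))
    have h2 := h1.const_mul (a/c^3)
    refine h2.congr_deriv ?_
    symm
    rw [Real.tan_eq_sin_div_cos]
    have hpy := Real.sin_sq_add_cos_sq θ
    field_simp
    linear_combination (a^2) * hpy
      + (Real.sin θ^2) * hc2
  have harc2 : ∀ θ : ℝ, Real.sin θ ≠ 0 →
      HasDerivAt (fun θ => -(a/c^3) * Real.arctan ((a/c) * (Real.cos θ / Real.sin θ)))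
      ((a/c^3) * (a*c / (a^2 + b^2 * Real.sin θ^2))) θ := by
    intro θ hsin
    have hcot : HasDerivAt (fun θ : ℝ => Real.cos θ / Real.sin θ)
        ((-Real.sin θ * Real.sin θ - Real.cos θ * Real.cos θ)/Real.sin θ^2) θ :=
      (Real.hasDerivAt_cos θ).div (Real.hasDerivAt_sin θ) hsin
    have h1 := (Real.hasDerivAt_arctan ((a/c) * (Real.cos θ / Real.sin θ))).comp θ
      (hcot.const_mul (a/c))
    have h2 := h1.const_mul (-(a/c^3))
    refine h2.congr_deriv ?_
    symm
    have hpy := Real.sin_sq_add_cos_sq θ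
    field_simp
    linear_combination (-(b^2*Real.sin θ^2)) * hpy
      + (Real.sin θ^2) * hc2
  have hcomb : ∀ θ : ℝ, (b^2/c^2) * ((a^2 - (2*a^2+b^2) * Real.sin θ^2) / (a^2 + b^2 * Real.sin θ^2)^2)
      + (a/c^3) * (a*c / (a^2 + b^2 * Real.sin θ^2)) = f θ := by
    intro θ
    rw [hfdef]
    dsimp only
    have hu' := (hu θ).ne'
    have h2 : (b^2/c^2) * ((a^2 - (2*a^2+b^2) * Real.sin θ^2) / (a^2 + b^2 * Real.sin θ^2)^2)
        + (a/c^3) * (a*c / (a^2 + b^2 * Real.sin θ^2))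
        = (b^2*(a^2 - (2*a^2+b^2) * Real.sin θ^2) + a^2*(a^2 + b^2 * Real.sin θ^2))
          / (c^2*(a^2 + b^2 * Real.sin θ^2)^2) := by
      field_simp
    rw [h2, div_eq_div_iff (by positivity) (by positivity)]
    linear_combination (-(a^2 + b^2*Real.sin θ^2)^2 * (a^2 - b^2*Real.sin θ^2)) * hc2
  set F₁ : ℝ → ℝ := fun θ => A θ + (a/c^3) * Real.arctan ((c/a) * Real.tan θ) with hF1def
  set F₂ : ℝ → ℝ := fun θ => A θ + (-(a/c^3) * Real.arctan ((a/c) * (Real.cos θ / Real.sin θ)))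
    with hF2def
  have hdF1 : ∀ θ : ℝ, Real.cos θ ≠ 0 → HasDerivAt F₁ (f θ) θ := by
    intro θ h
    have h1 := (hA θ).add (harc1 θ h)
    refine h1.congr_deriv ?_
    exact hcomb θ
  have hdF2 : ∀ θ : ℝ, Real.sin θ ≠ 0 → HasDerivAt F₂ (f θ) θ := by
    intro θ h
    have h1 := (hA θ).add (harc2 θ h)
    refine h1.congr_deriv ?_
    exact hcomb θ
  have hint : ∀ u v : ℝ, IntervalIntegrable f volume u v := fun u v =>
    hfc.intervalIntegrable u v
  have hpi := Real.pi_pos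
  have h01 : ∫ θ in (0:ℝ)..(π/4), f θ = F₁ (π/4) - F₁ 0 := by
    apply intervalIntegral.integral_eq_sub_of_hasDerivAt ?_ (hint 0 (π/4))
    intro θ hθ
    rw [Set.uIcc_of_le (by positivity)] at hθ
    refine hdF1 θ (Real.cos_pos_of_mem_Ioo ⟨?_, ?_⟩).ne'
    · linarith [hθ.1]
    · linarith [hθ.2]
  have h12 : ∫ θ in (π/4)..(3*π/4), f θ = F₂ (3*π/4) - F₂ (π/4) := by
    apply intervalIntegral.integral_eq_sub_of_hasDerivAt ?_ (hint (π/4) (3*π/4))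
    intro θ hθ
    rw [Set.uIcc_of_le (by linarith)] at hθ
    refine hdF2 θ (Real.sin_pos_of_pos_of_lt_pi ?_ ?_).ne'
    · linarith [hθ.1]
    · linarith [hθ.2]
  have h23 : ∫ θ in (3*π/4)..π, f θ = F₁ π - F₁ (3*π/4) := by
    apply intervalIntegral.integral_eq_sub_of_hasDerivAt ?_ (hint (3*π/4) π)
    intro θ hθ
    rw [Set.uIcc_of_le (by linarith)] at hθ
    refine hdF1 θ (Real.cos_neg_of_pi_div_two_lt_of_lt ?_ ?_).ne
    · linarith [hθ.1]
    · linarith [hθ.2]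
  have hsplit : (∫ θ in (0:ℝ)..π, f θ)
      = (∫ θ in (0:ℝ)..(π/4), f θ) + (∫ θ in (π/4)..(3*π/4), f θ)
        + (∫ θ in (3*π/4)..π, f θ) := by
    rw [intervalIntegral.integral_add_adjacent_intervals (hint 0 (π/4)) (hint (π/4) (3*π/4)),
      intervalIntegral.integral_add_adjacent_intervals (hint 0 (3*π/4)) (hint (3*π/4) π)]
  -- endpoint values
  have hs4 : Real.sin (π/4) = Real.sqrt 2 / 2 := Real.sin_pi_div_four
  have hc4 : Real.cos (π/4) = Real.sqrt 2 / 2 := Real.cos_pi_div_four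
  have hs34 : Real.sin (3*π/4) = Real.sqrt 2 / 2 := by
    rw [show 3*π/4 = π - π/4 by ring, Real.sin_pi_sub, hs4]
  have hc34 : Real.cos (3*π/4) = -(Real.sqrt 2 / 2) := by
    rw [show 3*π/4 = π - π/4 by ring, Real.cos_pi_sub, hc4]
  have hsq2 : Real.sqrt 2 / 2 ≠ 0 := by positivity
  have htan34 : Real.tan (3*π/4) = -1 := by
    rw [Real.tan_eq_sin_div_cos, hs34, hc34, div_neg, div_self hsq2]
  have haC : a/c = (c/a)⁻¹ := by rw [inv_div]
  have harcsum : Real.arctan (a/c) = π/2 - Real.arctan (c/a) := by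
    rw [haC]
    exact Real.arctan_inv_of_pos (by positivity)
  rw [hsplit, h01, h12, h23, hF1def, hF2def]
  dsimp only
  rw [hAdef]
  dsimp only
  rw [Real.sin_zero, Real.cos_zero, Real.tan_zero, Real.sin_pi, Real.cos_pi, Real.tan_pi,
    hs4, hc4, hs34, hc34, htan34, mul_zero, Real.arctan_zero, Real.tan_pi_div_four]
  rw [show (c/a) * -1 = -(c/a) by ring, Real.arctan_neg]
  rw [show (a/c) * (-(Real.sqrt 2 / 2) / (Real.sqrt 2 / 2)) = -(a/c) by
      rw [neg_div, div_self hsq2]; ring, Real.arctan_neg]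
  rw [show (a/c) * ((Real.sqrt 2 / 2) / (Real.sqrt 2 / 2)) = a/c by
      rw [div_self hsq2, mul_one]]
  rw [mul_one, harcsum]
  ring
end D


lemma besselJ0_abs_le_one (y : ℝ) : |besselJ 0 y| ≤ 1 := by
  have h := besselJ0_repr y
  have hpi := Real.pi_pos
  have hb : ‖∫ θ in Set.Ioc (0:ℝ) π, Real.cos (y * Real.sin θ)‖ ≤ 1 * (volume (Set.Ioc (0:ℝ) π)).toReal := by
    apply norm_setIntegral_le_of_norm_le_const_ae
    · rw [Real.volume_Ioc]; exact ENNReal.ofReal_lt_top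
    · apply Filter.Eventually.of_forall
      intro θ
      rw [Real.norm_eq_abs]
      exact Real.abs_cos_le_one _
  rw [Real.volume_Ioc, ENNReal.toReal_ofReal (by linarith), one_mul] at hb
  rw [← h, Real.norm_eq_abs, abs_mul, abs_of_pos hpi] at hb
  nlinarith [hb, hpi]

theorem stmt12 (a b : ℝ) (ha : 0 < a) (hb : 0 < b) :
    IntegrableOn (fun x : ℝ => x * Real.exp (-a * x) * besselJ 0 (b * x)) (Set.Ioi 0) ∧
    ∫ x in Set.Ioi (0:ℝ), x * Real.exp (-a * x) * besselJ 0 (b * x)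
      = a / (a^2 + b^2) ^ ((3:ℝ)/2) := by
  have hpi := Real.pi_pos
  set μ := volume.restrict (Set.Ioi (0:ℝ))
  set ν := volume.restrict (Set.Ioc (0:ℝ) π)
  set g : ℝ → ℝ → ℝ := fun x θ => x * Real.exp (-a * x) * Real.cos (b * x * Real.sin θ) with hgdef
  have hg_prod : Integrable (Function.uncurry g) (μ.prod ν) := by
    have hmeas : Continuous (Function.uncurry g) := by
      apply Continuous.mul
      · fun_prop
      · apply Real.continuous_cos.comp
        fun_prop
    have habs : IntegrableOn (fun x : ℝ => |x| * Real.exp (-a * x)) (Set.Ioi 0) := by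
      apply (integrable_x_exp ha).congr
      filter_upwards [ae_restrict_mem measurableSet_Ioi] with x hx
      rw [abs_of_pos hx]
    have hone : Integrable (fun _ : ℝ => (1:ℝ)) ν :=
      integrableOn_const (by simp [Real.volume_Ioc, hpi])
    have hbound : Integrable (fun z : ℝ × ℝ => |z.1| * Real.exp (-a * z.1)) (μ.prod ν) :=
      (Integrable.mul_prod habs hone).congr (Filter.Eventually.of_forall fun z => by
        dsimp only; rw [mul_one])
    apply Integrable.mono' hbound hmeas.aestronglyMeasurable
    apply Filter.Eventually.of_forall
    intro z
    rw [Function.uncurry, hgdef]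
    dsimp only
    simp only [Real.norm_eq_abs, abs_mul]
    calc |z.1| * |Real.exp (-a*z.1)| * |Real.cos (b*z.1*Real.sin z.2)|
        ≤ |z.1| * |Real.exp (-a*z.1)| * 1 := by
          gcongr; exact Real.abs_cos_le_one _
      _ = |z.1| * Real.exp (-a*z.1) := by rw [mul_one, Real.abs_exp]
  have hfun : ∀ x : ℝ, x * Real.exp (-a * x) * besselJ 0 (b * x)
      = (1/π) * ∫ θ, g x θ ∂ν := by
    intro x
    have h := besselJ0_repr (b * x)
    have hJ : besselJ 0 (b * x) = (1/π) * ∫ θ in Set.Ioc (0:ℝ) π, Real.cos (b * x * Real.sin θ) := by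
      rw [← h]; field_simp
    rw [hJ, hgdef]
    rw [MeasureTheory.integral_const_mul (x * Real.exp (-a*x))]
    ring
  constructor
  · have hx_int := hg_prod.integral_prod_left
    apply ((hx_int.const_mul (1/π)).congr (Filter.Eventually.of_forall fun x => (hfun x).symm))
  · rw [MeasureTheory.setIntegral_congr_fun measurableSet_Ioi
      (fun x _ => hfun x)]
    rw [MeasureTheory.integral_const_mul]
    have hswap := MeasureTheory.integral_integral_swap hg_prod
    rw [hswap]
    have hinner : ∀ θ : ℝ, (∫ x, g x θ ∂μ)
        = (a^2 - b^2 * Real.sin θ^2)/(a^2 + b^2 * Real.sin θ^2)^2 := by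
      intro θ
      have h := (laplace_x_cos a (b * Real.sin θ) ha).2
      have harg : ∀ x : ℝ, g x θ = x * Real.exp (-a*x) * Real.cos ((b * Real.sin θ) * x) := by
        intro x
        rw [hgdef]
        dsimp only
        congr 2
        ring
      rw [show (∫ x, g x θ ∂μ) = ∫ x in Set.Ioi (0:ℝ), x * Real.exp (-a*x) * Real.cos ((b * Real.sin θ) * x) from
        MeasureTheory.setIntegral_congr_fun measurableSet_Ioi (fun x _ => harg x)]
      rw [h, mul_pow]
    have hIoc : (∫ θ, (a^2 - b^2 * Real.sin θ^2)/(a^2 + b^2 * Real.sin θ^2)^2 ∂ν)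
        = ∫ θ in (0:ℝ)..π, (a^2 - b^2 * Real.sin θ^2)/(a^2 + b^2 * Real.sin θ^2)^2 := by
      rw [intervalIntegral.integral_of_le hpi.le]
    rw [MeasureTheory.integral_congr_ae (Filter.Eventually.of_forall hinner), hIoc,
      trig_integral a b ha hb]
    have hc3 : (a^2 + b^2) ^ ((3:ℝ)/2) = Real.sqrt (a^2+b^2) ^ 3 := by
      rw [Real.sqrt_eq_rpow, ← Real.rpow_natCast ((a^2+b^2) ^ ((1:ℝ)/2)) 3,
        ← Real.rpow_mul (by positivity)]
      norm_num
    rw [hc3]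
    field_simp
end

section
/- For real a > 0 and b > 0, the Laplace transform of J₀ satisfies ∫₀^∞ e^{−ax} J₀(bx) dx = 1/√(a² + b²). -/
open Real MeasureTheory

lemma prod_eq (n : ℕ) : ∏ i ∈ Finset.range n, ((2*(i:ℝ)+1)/(2*i+2))
    = (2*n).factorial / (4^n * (n.factorial)^2) := by
  induction n with
  | zero => simp
  | succ k ih =>
    rw [Finset.prod_range_succ, ih]
    have h1 : ((2*(k+1)).factorial : ℝ) = (2*k+2) * ((2*k+1) * (2*k).factorial) := by
      have : 2*(k+1) = (2*k+1) + 1 := by ring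
      rw [this]
      push_cast [Nat.factorial_succ]
      ring
    have h2 : ((k+1).factorial : ℝ) = (k+1) * k.factorial := by
      push_cast [Nat.factorial_succ]; ring
    have hk : ((2*k).factorial : ℝ) ≠ 0 := Nat.cast_ne_zero.2 (Nat.factorial_ne_zero _)
    have hk2 : (k.factorial : ℝ) ≠ 0 := Nat.cast_ne_zero.2 (Nat.factorial_ne_zero _)
    rw [h1, h2]
    push_cast
    field_simp
    ring

lemma sinpow (m : ℕ) : ∫ θ in (0:ℝ)..π, Real.sin θ ^ (2*m)
    = π * (2*m).factorial / (4^m * (m.factorial)^2) := by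
  rw [integral_sin_pow_even, prod_eq]
  ring


lemma besselJ_eq (t : ℝ) :
    besselJ 0 t = (1/π) * ∫ θ in (0:ℝ)..π, Real.cos (t * Real.sin θ) := by
  have hsum : Summable (fun m : ℕ => π * (|t|^(2*m) / (2*m).factorial)) := by
    apply Summable.mul_left
    exact (Real.summable_pow_div_factorial |t|).comp_injective
      (i := fun m : ℕ => 2*m) (fun x y h => by simpa using h)
  have key : (∫ θ in Set.Ioc (0:ℝ) π, Real.cos (t * Real.sin θ))
      = ∑' m : ℕ, ∫ θ in Set.Ioc (0:ℝ) π,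
          (-1:ℝ)^m * (t * Real.sin θ)^(2*m) / (2*m).factorial := by
    rw [show (fun θ => Real.cos (t * Real.sin θ))
        = fun θ => ∑' m : ℕ, (-1:ℝ)^m * (t * Real.sin θ)^(2*m) / (2*m).factorial
      from funext fun θ => Real.cos_eq_tsum _]
    rw [← MeasureTheory.integral_tsum_of_summable_integral_norm]
    · intro m
      apply Continuous.integrableOn_Ioc
      continuity
    · apply Summable.of_nonneg_of_le (fun m => integral_nonneg (fun θ => norm_nonneg _))
        (fun m => ?_) hsum
      have hb : ∀ θ ∈ Set.Ioc (0:ℝ) π,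
          ‖(-1:ℝ)^m * (t * Real.sin θ)^(2*m) / (2*m).factorial‖
            ≤ |t|^(2*m) / (2*m).factorial := by
        intro θ _
        rw [norm_div, norm_mul, norm_pow, norm_pow, norm_neg, norm_one, one_pow, one_mul, Real.norm_natCast]
        have h1 : ‖t * Real.sin θ‖ ≤ |t| := by
          rw [norm_mul, Real.norm_eq_abs, Real.norm_eq_abs]
          calc |t| * |Real.sin θ| ≤ |t| * 1 := by gcongr; exact abs_sin_le_one θ
            _ = |t| := mul_one _
        gcongr
        all_goals first | positivity | exact h1
      calc ∫ θ in Set.Ioc (0:ℝ) π, ‖(-1:ℝ)^m * (t * Real.sin θ)^(2*m) / (2*m).factorial‖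
          = ‖∫ θ in Set.Ioc (0:ℝ) π, ‖(-1:ℝ)^m * (t * Real.sin θ)^(2*m) / (2*m).factorial‖‖ := by
            rw [Real.norm_of_nonneg (integral_nonneg (fun θ => norm_nonneg _))]
        _ ≤ (|t|^(2*m) / (2*m).factorial) * (volume (Set.Ioc (0:ℝ) π)).toReal := by
            apply MeasureTheory.norm_setIntegral_le_of_norm_le_const
            · rw [Real.volume_Ioc]; exact ENNReal.ofReal_lt_top
            · intro θ hθ
              rw [Real.norm_of_nonneg (norm_nonneg _)]
              exact hb θ hθ
        _ ≤ π * (|t|^(2*m) / (2*m).factorial) := by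
            rw [Real.volume_Ioc, sub_zero, ENNReal.toReal_ofReal pi_pos.le, mul_comm]
  rw [intervalIntegral.integral_of_le pi_pos.le, key]
  have term : ∀ m : ℕ, (∫ θ in Set.Ioc (0:ℝ) π,
        (-1:ℝ)^m * (t * Real.sin θ)^(2*m) / (2*m).factorial)
      = π * ((-1:ℝ)^m / (m.factorial * m.factorial) * (t/2)^(2*m)) := by
    intro m
    have e1 : (fun θ => (-1:ℝ)^m * (t * Real.sin θ)^(2*m) / (2*m).factorial)
        = fun θ => ((-1:ℝ)^m * t^(2*m) / (2*m).factorial) * Real.sin θ^(2*m) := by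
      funext θ; rw [mul_pow]; ring
    rw [e1, MeasureTheory.integral_const_mul,
      ← intervalIntegral.integral_of_le pi_pos.le, sinpow]
    have h2 : ((2*m).factorial : ℝ) ≠ 0 := Nat.cast_ne_zero.2 (Nat.factorial_ne_zero _)
    have h3 : (m.factorial : ℝ) ≠ 0 := Nat.cast_ne_zero.2 (Nat.factorial_ne_zero _)
    have h4 : (t/2)^(2*m) = t^(2*m)/4^m := by
      rw [div_pow]; congr 1; rw [pow_mul]; norm_num
    rw [h4]
    field_simp
  simp_rw [term]
  rw [tsum_mul_left, besselJ]
  simp only [Nat.add_zero, add_zero]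
  rw [one_div, inv_mul_cancel_left₀ pi_ne_zero]


lemma laplace_cos {a : ℝ} (ha : 0 < a) (c : ℝ) :
    ∫ x in Set.Ioi (0:ℝ), Real.exp (-a*x) * Real.cos (c*x) = a / (a^2 + c^2) := by
  have hd : (0:ℝ) < a^2 + c^2 := by positivity
  set F : ℝ → ℝ := fun x => Real.exp (-a*x) * (-a * Real.cos (c*x) + c * Real.sin (c*x)) / (a^2+c^2) with hF
  have hderiv : ∀ x ∈ Set.Ici (0:ℝ), HasDerivAt F (Real.exp (-a*x) * Real.cos (c*x)) x := by
    intro x _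
    have h1 : HasDerivAt (fun x => Real.exp (-a*x)) (-a * Real.exp (-a*x)) x := by
      simpa [mul_comm] using ((hasDerivAt_id x).const_mul (-a)).exp
    have h2 : HasDerivAt (fun x => Real.cos (c*x)) (-(Real.sin (c*x)) * c) x := by
      simpa using ((hasDerivAt_id x).const_mul c).cos
    have h3 : HasDerivAt (fun x => Real.sin (c*x)) (Real.cos (c*x) * c) x := by
      simpa using ((hasDerivAt_id x).const_mul c).sin
    have := ((h1.mul ((h2.const_mul (-a)).add (h3.const_mul c))).div_const (a^2+c^2))
    refine this.congr_deriv ?_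
    simp only [Pi.add_apply]
    field_simp
    ring
  have hint : IntegrableOn (fun x => Real.exp (-a*x) * Real.cos (c*x)) (Set.Ioi (0:ℝ)) := by
    apply Integrable.mono' (g := fun x => Real.exp (-a*x)) ?_ ?_ ?_
    · simpa [neg_mul, IntegrableOn] using exp_neg_integrableOn_Ioi 0 ha
    · exact (Continuous.mul (by continuity) (by continuity)).aestronglyMeasurable.restrict
    · filter_upwards with x
      rw [norm_mul, Real.norm_eq_abs, Real.norm_eq_abs, abs_exp]
      nth_rewrite 2 [← mul_one (Real.exp (-a*x))]
      gcongr
      exact abs_cos_le_one _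
  have htend : Filter.Tendsto F Filter.atTop (nhds 0) := by
    have hb : ∀ x : ℝ, ‖F x‖ ≤ (a + |c|) / (a^2+c^2) * Real.exp (-a*x) := by
      intro x
      rw [hF]
      simp only [norm_div, Real.norm_eq_abs, abs_mul]
      rw [abs_of_pos hd, abs_exp]
      rw [div_le_iff₀ hd]  -- maybe easier: gcongr style
      have : |(-a * Real.cos (c*x) + c * Real.sin (c*x))| ≤ a + |c| := by
        calc |(-a * Real.cos (c*x) + c * Real.sin (c*x))|
            ≤ |(-a) * Real.cos (c*x)| + |c * Real.sin (c*x)| := abs_add_le _ _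
          _ ≤ a * 1 + |c| * 1 := by
              rw [abs_mul, abs_mul, abs_neg, abs_of_pos ha]
              gcongr
              · exact abs_cos_le_one _
              · exact abs_sin_le_one _
          _ = a + |c| := by ring
      calc Real.exp (-a*x) * |(-a * Real.cos (c*x) + c * Real.sin (c*x))|
          ≤ Real.exp (-a*x) * (a + |c|) := by gcongr
        _ = (a + |c|) / (a^2+c^2) * Real.exp (-a*x) * (a^2+c^2) := by field_simp
    have hexp : Filter.Tendsto (fun x : ℝ => (a + |c|) / (a^2+c^2) * Real.exp (-a*x))
        Filter.atTop (nhds 0) := by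
      rw [show (0:ℝ) = (a + |c|) / (a^2+c^2) * 0 by ring]
      apply Filter.Tendsto.const_mul
      apply Real.tendsto_exp_atBot.comp
      exact Filter.Tendsto.const_mul_atTop_of_neg (neg_neg_iff_pos.2 ha) Filter.tendsto_id
    apply squeeze_zero_norm hb hexp
  have := MeasureTheory.integral_Ioi_of_hasDerivAt_of_tendsto'
    (f := F) (f' := fun x => Real.exp (-a*x) * Real.cos (c*x)) hderiv hint htend
  rw [this, hF]
  simp
  field_simp


lemma trig_int {a b : ℝ} (ha : 0 < a) (hb : 0 < b) :
    ∫ θ in (0:ℝ)..π, a / (a^2 + b^2 * Real.sin θ^2) = π / Real.sqrt (a^2+b^2) := by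
  set C := Real.sqrt (a^2+b^2) with hCdef
  have hC : 0 < C := Real.sqrt_pos.2 (by positivity)
  have hC2 : C^2 = a^2 + b^2 := Real.sq_sqrt (by positivity)
  set k := C / a with hkdef
  have hk : 0 < k := div_pos hC ha
  have hka : a < C := by
    rw [hCdef]
    nth_rewrite 1 [show a = Real.sqrt (a^2) from (Real.sqrt_sq ha.le).symm]
    exact Real.sqrt_lt_sqrt (by positivity) (by nlinarith)
  have hk1 : 1 < k := (one_lt_div ha).2 hka
  have hak : a * k = C := by rw [hkdef]; field_simp
  set F : ℝ → ℝ := fun θ =>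
    (θ + Real.arctan ((k-1) * (Real.sin θ * Real.cos θ) / (1 + (k-1) * Real.sin θ^2))) / C
    with hFdef
  have hden : ∀ θ : ℝ, (0:ℝ) < 1 + (k-1) * Real.sin θ^2 := by
    intro θ
    nlinarith [sq_nonneg (Real.sin θ)]
  have hderiv : ∀ θ : ℝ, HasDerivAt F (a / (a^2 + b^2 * Real.sin θ^2)) θ := by
    intro θ
    have hnum : HasDerivAt (fun θ => (k-1) * (Real.sin θ * Real.cos θ))
        ((k-1) * (1 - 2 * Real.sin θ^2)) θ := by
      have := ((Real.hasDerivAt_sin θ).mul (Real.hasDerivAt_cos θ)).const_mul (k-1)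
      refine this.congr_deriv ?_
      symm
      linear_combination (1-k) * (Real.sin_sq_add_cos_sq θ)
    have hd2 : HasDerivAt (fun θ => 1 + (k-1) * Real.sin θ^2)
        ((k-1) * (2 * (Real.sin θ * Real.cos θ))) θ := by
      have := (((Real.hasDerivAt_sin θ).pow 2).const_mul (k-1)).const_add 1
      refine this.congr_deriv ?_
      ring
    have hg := hnum.div hd2 (ne_of_gt (hden θ))
    have harc := hg.arctan
    have hid := ((hasDerivAt_id θ).add harc).div_const C
    refine hid.congr_deriv ?_
    symm
    simp only [Pi.div_apply]
    have h2 : Real.cos θ^2 = 1 - Real.sin θ^2 := Real.cos_sq' θ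
    have hd := hden θ
    have hq : a^2 + b^2 * Real.sin θ^2 > 0 := by positivity
    have hg2 : (1:ℝ) + ((k-1) * (Real.sin θ * Real.cos θ) / (1 + (k-1) * Real.sin θ^2))^2 > 0 := by
      positivity
    set s := Real.sin θ
    set c := Real.cos θ
    have hb2 : b^2 = C^2 - a^2 := by linarith [hC2]
    clear_value C k
    rw [eq_div_iff (ne_of_gt hC)]
    rw [hb2, ← hak] at hq ⊢
    have e4 : c^4 = (1-s^2)^2 := by rw [show c^4=(c^2)^2 by ring, h2]
    have e6 : c^6 = (1-s^2)^3 := by rw [show c^6=(c^2)^3 by ring, h2]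
    have e8 : c^8 = (1-s^2)^4 := by rw [show c^8=(c^2)^4 by ring, h2]
    have hD : (1 + (k-1)*s^2) ≠ 0 := hd.ne'
    have hD' : 1 + s^2*(k-1) ≠ 0 := by rw [mul_comm]; exact hD
    have hk2 : 0 ≤ k^2-1 := by nlinarith
    have hQ : (1 + (k^2-1)*s^2) ≠ 0 := by
      have := mul_nonneg hk2 (sq_nonneg s); positivity
    have hsum : 1 + ((k-1)*(s*c)/(1+(k-1)*s^2))^2 = (1+(k^2-1)*s^2)/(1+(k-1)*s^2)^2 := by
      rw [div_pow, one_add_div (pow_ne_zero 2 hD)]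
      congr 1
      linear_combination (k-1)^2*s^2*h2
    rw [hsum]
    have ha2 : a^2 + ((a*k)^2 - a^2)*s^2 = a^2 * (1+(k^2-1)*s^2) := by ring
    rw [ha2]
    field_simp [hD']
    ring_nf
    simp only [e8, e6, e4, h2]
    ring
  have hcont : Continuous fun θ : ℝ => a / (a^2 + b^2 * Real.sin θ^2) := by
    apply Continuous.div continuous_const (by continuity)
    intro θ; positivity
  rw [intervalIntegral.integral_eq_sub_of_hasDerivAt (fun θ _ => hderiv θ)
    (hcont.intervalIntegrable 0 π)]
  rw [hFdef]
  simp


theorem stmt13 (a b : ℝ) (ha : 0 < a) (hb : 0 < b) :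
    IntegrableOn (fun x : ℝ => Real.exp (-a * x) * besselJ 0 (b * x)) (Set.Ioi 0) ∧
    ∫ x in Set.Ioi (0:ℝ), Real.exp (-a * x) * besselJ 0 (b * x)
      = 1 / Real.sqrt (a^2 + b^2) := by
  have hbJcont : Continuous (besselJ 0) := by
    have h : Continuous fun t : ℝ => (1/π) * ∫ θ in (0:ℝ)..π, Real.cos (t * Real.sin θ) := by
      apply Continuous.mul continuous_const
      apply intervalIntegral.continuous_parametric_intervalIntegral_of_continuous'
        (μ := volume) (f := fun t θ => Real.cos (t * Real.sin θ))
      exact Real.continuous_cos.comp (continuous_fst.mul (Real.continuous_sin.comp continuous_snd))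
    rw [show besselJ 0 = fun t => (1/π) * ∫ θ in (0:ℝ)..π, Real.cos (t * Real.sin θ)
      from funext besselJ_eq]
    exact h
  have hbound : ∀ t, |besselJ 0 t| ≤ 1 := by
    intro t
    rw [besselJ_eq, abs_mul, abs_of_pos (by positivity : (0:ℝ) < 1/π)]
    have h1 : ‖∫ θ in (0:ℝ)..π, Real.cos (t * Real.sin θ)‖ ≤ 1 * |π - 0| :=
      intervalIntegral.norm_integral_le_of_norm_le_const
        (fun θ _ => by rw [Real.norm_eq_abs]; exact Real.abs_cos_le_one _)
    rw [Real.norm_eq_abs] at h1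
    rw [sub_zero, one_mul, abs_of_pos pi_pos] at h1
    calc 1/π * |∫ θ in (0:ℝ)..π, Real.cos (t * Real.sin θ)| ≤ 1/π * π := by
          gcongr
      _ = 1 := by field_simp
  have hInt : IntegrableOn (fun x : ℝ => Real.exp (-a * x) * besselJ 0 (b * x))
      (Set.Ioi 0) := by
    apply Integrable.mono' (g := fun x => Real.exp (-a*x)) ?_ ?_ ?_
    · simpa [neg_mul, IntegrableOn] using exp_neg_integrableOn_Ioi 0 ha
    · exact (((Real.continuous_exp.comp (by continuity)).mul
        (hbJcont.comp (by continuity)))).aestronglyMeasurable.restrict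
    · filter_upwards with x
      rw [norm_mul, Real.norm_eq_abs, Real.norm_eq_abs, Real.abs_exp]
      nth_rewrite 2 [← mul_one (Real.exp (-a*x))]
      gcongr
      exact hbound _
  refine ⟨hInt, ?_⟩
  set C := Real.sqrt (a^2+b^2) with hCdef
  have hC : 0 < C := Real.sqrt_pos.2 (by positivity)
  have step1 : ∀ x : ℝ, Real.exp (-a * x) * besselJ 0 (b * x)
      = (1/π) * ∫ θ in Set.Ioc (0:ℝ) π, Real.exp (-a*x) * Real.cos ((b * Real.sin θ) * x) := by
    intro x
    rw [besselJ_eq (b*x), intervalIntegral.integral_of_le pi_pos.le, ← mul_assoc,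
      mul_comm (Real.exp (-a*x)) (1/π), mul_assoc, ← MeasureTheory.integral_const_mul]
    congr 1
    apply MeasureTheory.integral_congr_ae
    filter_upwards with θ
    rw [show b * x * Real.sin θ = (b * Real.sin θ) * x from by ring]
  have hH : Integrable (Function.uncurry fun x θ =>
      Real.exp (-a*x) * Real.cos ((b * Real.sin θ) * x))
      ((volume.restrict (Set.Ioi (0:ℝ))).prod (volume.restrict (Set.Ioc (0:ℝ) π))) := by
    apply Integrable.mono'
      (g := fun p : ℝ × ℝ => Real.exp (-a * p.1) * 1) ?_ ?_ ?_
    · refine Integrable.mul_prod (f := fun x => Real.exp (-a*x)) (g := fun _ => (1:ℝ)) ?_ ?_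
      · simpa [neg_mul, IntegrableOn] using exp_neg_integrableOn_Ioi 0 ha
      · rw [MeasureTheory.integrable_const_iff]
        right
        simp [isFiniteMeasure_restrict, Real.volume_Ioc]
    · apply Continuous.aestronglyMeasurable
      apply Continuous.mul
      · exact Real.continuous_exp.comp (by continuity)
      · apply Real.continuous_cos.comp
        exact ((continuous_const.mul (Real.continuous_sin.comp continuous_snd)).mul continuous_fst)
    · filter_upwards with p
      rw [Function.uncurry]
      rw [norm_mul, Real.norm_eq_abs, Real.norm_eq_abs, Real.abs_exp, mul_one]
      nth_rewrite 2 [← mul_one (Real.exp (-a*p.1))]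
      gcongr
      exact Real.abs_cos_le_one _
  calc ∫ x in Set.Ioi (0:ℝ), Real.exp (-a * x) * besselJ 0 (b * x)
      = ∫ x in Set.Ioi (0:ℝ), (1/π) * ∫ θ in Set.Ioc (0:ℝ) π,
          Real.exp (-a*x) * Real.cos ((b * Real.sin θ) * x) := by
        apply MeasureTheory.integral_congr_ae
        filter_upwards with x
        exact step1 x
    _ = (1/π) * ∫ x in Set.Ioi (0:ℝ), ∫ θ in Set.Ioc (0:ℝ) π,
          Real.exp (-a*x) * Real.cos ((b * Real.sin θ) * x) := by
        rw [MeasureTheory.integral_const_mul]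
    _ = (1/π) * ∫ θ in Set.Ioc (0:ℝ) π, ∫ x in Set.Ioi (0:ℝ),
          Real.exp (-a*x) * Real.cos ((b * Real.sin θ) * x) := by
        rw [MeasureTheory.integral_integral_swap hH]
    _ = (1/π) * ∫ θ in Set.Ioc (0:ℝ) π, a / (a^2 + b^2 * Real.sin θ^2) := by
        congr 1
        apply MeasureTheory.integral_congr_ae
        filter_upwards with θ
        rw [laplace_cos ha (b * Real.sin θ)]
        rw [mul_pow]
    _ = 1 / C := by
        rw [← intervalIntegral.integral_of_le pi_pos.le, trig_int ha hb, ← hCdef]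
        field_simp
end
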